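/- Let A be a set and let f, g : A → S² be functions into the unit sphere in ℝ³ satisfying the constraint C: for all x, y ∈ A and all R_x, R_y ∈ SO(3), R_x f(x) = R_y f(y) if and only if R_x g(x) = R_y g(y). Then for all x, y ∈ A, ⟨f(x), f(y)⟩ = ⟨g(x), g(y)⟩. -/

import Mathlib

open Matrix

/-- `SO3 R` means `R` is a real 3×3 special orthogonal (rotation) matrix. -/
def SO3 (R : Matrix (Fin 3) (Fin 3) ℝ) : Prop := Rᵀ * R = 1 ∧ R.det = 1

/-- Action of a 3×3 matrix on ℝ³ by matrix-vector multiplication. -/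
noncomputable def act (R : Matrix (Fin 3) (Fin 3) ℝ) (v : EuclideanSpace ℝ (Fin 3)) :
    EuclideanSpace ℝ (Fin 3) := Matrix.toEuclideanLin R v

lemma act_apply (R : Matrix (Fin 3) (Fin 3) ℝ) (v : EuclideanSpace ℝ (Fin 3)) (i : Fin 3) :
    act R v i = ∑ j, R i j * v j := rfl

lemma act_one (v : EuclideanSpace ℝ (Fin 3)) : act 1 v = v := by
  ext i; simp [act_apply, Matrix.one_apply]

lemma act_smul (R : Matrix (Fin 3) (Fin 3) ℝ) (c : ℝ) (v : EuclideanSpace ℝ (Fin 3)) :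
    act R (c • v) = c • act R v := map_smul (Matrix.toEuclideanLin R) c v

noncomputable def rot (u : EuclideanSpace ℝ (Fin 3)) : Matrix (Fin 3) (Fin 3) ℝ :=
  Matrix.of (fun i j => 2 * u i * u j) - 1

lemma sum_sq_of_norm_one {u : EuclideanSpace ℝ (Fin 3)} (hu : ‖u‖ = 1) :
    ∑ i, u i * u i = 1 := by
  have := real_inner_self_eq_norm_sq u
  rw [hu] at this
  rw [PiLp.inner_apply] at this
  simpa [← sq] using this

lemma act_rot (u v : EuclideanSpace ℝ (Fin 3)) :
    act (rot u) v = (2 * inner ℝ u v : ℝ) • u - v := by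
  ext i
  simp only [act_apply, rot, Matrix.sub_apply, Matrix.of_apply, Matrix.one_apply,
    PiLp.sub_apply, PiLp.smul_apply, PiLp.inner_apply, RCLike.inner_apply, conj_trivial,
    smul_eq_mul, sub_mul, Finset.sum_sub_distrib, mul_comm, mul_assoc, Finset.mul_sum]
  simp [Fin.sum_univ_three, Fin.isValue]
  fin_cases i <;> simp <;> ring

lemma SO3_one : SO3 1 := by constructor <;> simp

lemma SO3_rot {u : EuclideanSpace ℝ (Fin 3)} (hu : ‖u‖ = 1) : SO3 (rot u) := by
  have hs := sum_sq_of_norm_one hu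
  have h0 : u 0 * u 0 + u 1 * u 1 + u 2 * u 2 = 1 := by
    rw [← hs, Fin.sum_univ_three]
  constructor
  · ext i j
    simp only [Matrix.mul_apply, Matrix.transpose_apply, rot, Matrix.sub_apply,
      Matrix.of_apply, Matrix.one_apply]
    fin_cases i <;> fin_cases j <;> simp [Fin.sum_univ_three] <;>
      first
        | linear_combination (4 * u 0 * u 0) * h0
        | linear_combination (4 * u 1 * u 1) * h0
        | linear_combination (4 * u 2 * u 2) * h0
        | linear_combination (4 * u 0 * u 1) * h0
        | linear_combination (4 * u 0 * u 2) * h0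
        | linear_combination (4 * u 1 * u 2) * h0
  · rw [Matrix.det_fin_three]
    simp only [rot, Matrix.sub_apply, Matrix.of_apply, Matrix.one_apply]
    norm_num [show ((0:Fin 3) = 2) = False from by decide, show ((1:Fin 3) = 2) = False from by decide,
      show ((2:Fin 3) = 0) = False from by decide, show ((2:Fin 3) = 1) = False from by decide]
    linear_combination 2 * h0

lemma exists_perp {u : EuclideanSpace ℝ (Fin 3)} (hu : u ≠ 0) :
    ∃ w : EuclideanSpace ℝ (Fin 3), w ≠ 0 ∧ (inner ℝ u w : ℝ) = 0 := by
  have hf : Fact (Module.finrank ℝ (EuclideanSpace ℝ (Fin 3)) = 2 + 1) :=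
    ⟨by simp [finrank_euclideanSpace_fin]⟩
  have h2 : Module.finrank ℝ ((ℝ ∙ u)ᗮ) = 2 := Submodule.finrank_orthogonal_span_singleton hu
  have : Nontrivial ((ℝ ∙ u)ᗮ) := by
    apply Module.nontrivial_of_finrank_pos (R := ℝ); omega
  obtain ⟨w, hw⟩ := exists_ne (0 : (ℝ ∙ u)ᗮ)
  refine ⟨w, by simpa using hw, ?_⟩
  have := w.2
  rw [Submodule.mem_orthogonal] at this
  exact this u (Submodule.mem_span_singleton_self u)

lemma exists_rot {u v : EuclideanSpace ℝ (Fin 3)} (hu : ‖u‖ = 1) (hv : ‖v‖ = 1) :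
    ∃ R, SO3 R ∧ act R u = v := by
  by_cases h : u + v = 0
  · -- v = -u : rotate by π about an orthogonal axis
    have hu0 : u ≠ 0 := by intro h0; rw [h0] at hu; simp at hu
    obtain ⟨w, hw0, hwperp⟩ := exists_perp hu0
    have hwn : ‖w‖ ≠ 0 := norm_ne_zero_iff.mpr hw0
    set m : EuclideanSpace ℝ (Fin 3) := ‖w‖⁻¹ • w with hm
    have hmn : ‖m‖ = 1 := by
      rw [hm, norm_smul]; simp [abs_of_nonneg (norm_nonneg w), inv_mul_cancel₀ hwn]
    refine ⟨rot m, SO3_rot hmn, ?_⟩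
    have hmu : (inner ℝ m u : ℝ) = 0 := by
      rw [hm, real_inner_smul_left, real_inner_comm, hwperp, mul_zero]
    rw [act_rot, hmu]
    have : v = -u := by linear_combination (norm := module) h
    rw [this]; module
  · set n : ℝ := ‖u + v‖ with hn
    have hn0 : n ≠ 0 := by
      rw [hn]; exact norm_ne_zero_iff.mpr h
    have hc : n ^ 2 = 2 + 2 * (inner ℝ u v : ℝ) := by
      rw [hn, ← real_inner_self_eq_norm_sq, real_inner_add_add_self,
        real_inner_self_eq_norm_sq, real_inner_self_eq_norm_sq, hu, hv]
      ring
    set m : EuclideanSpace ℝ (Fin 3) := n⁻¹ • (u + v) with hm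
    have hmn : ‖m‖ = 1 := by
      rw [hm, norm_smul, ← hn]
      simp [abs_of_nonneg (norm_nonneg (u+v)), abs_of_nonneg (show 0 ≤ n from hn ▸ norm_nonneg _), ← hn, inv_mul_cancel₀ hn0]
    refine ⟨rot m, SO3_rot hmn, ?_⟩
    have hmu : (inner ℝ m u : ℝ) = n⁻¹ * (1 + (inner ℝ u v : ℝ)) := by
      rw [hm, real_inner_smul_left, inner_add_left, real_inner_self_eq_norm_sq, hu,
        real_inner_comm]
      ring
    rw [act_rot, hmu, hm, smul_smul]
    have hcoef : 2 * (n⁻¹ * (1 + (inner ℝ u v : ℝ))) * n⁻¹ = 1 := by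
      calc 2 * (n⁻¹ * (1 + (inner ℝ u v : ℝ))) * n⁻¹
          = (2 + 2 * (inner ℝ u v : ℝ)) * (n⁻¹ * n⁻¹) := by ring
        _ = n ^ 2 * (n⁻¹ * n⁻¹) := by rw [hc]
        _ = 1 := by rw [sq]; field_simp
    rw [hcoef]; module

theorem stmt_4 {A : Type*} (f g : A → EuclideanSpace ℝ (Fin 3))
    (hf : ∀ x, ‖f x‖ = 1) (hg : ∀ x, ‖g x‖ = 1)
    (hC : ∀ x y : A, ∀ Rx Ry : Matrix (Fin 3) (Fin 3) ℝ, SO3 Rx → SO3 Ry →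
        (act Rx (f x) = act Ry (f y) ↔ act Rx (g x) = act Ry (g y))) :
    ∀ x y : A, (inner ℝ (f x) (f y) : ℝ) = inner ℝ (g x) (g y) := by
  have key : ∀ z, g z = (inner ℝ (f z) (g z) : ℝ) • f z := by
    intro z
    have h1 : act (rot (f z)) (f z) = act 1 (f z) := by
      rw [act_rot, act_one, real_inner_self_eq_norm_sq, hf z]
      module
    have h2 := (hC z z (rot (f z)) 1 (SO3_rot (hf z)) SO3_one).mp h1
    rw [act_rot, act_one] at h2
    have : (2 * (inner ℝ (f z) (g z) : ℝ)) • f z = g z + g z := by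
      linear_combination (norm := module) h2
    have h3 : (2 : ℝ) • g z = (2 * (inner ℝ (f z) (g z) : ℝ)) • f z := by
      rw [this]; module
    have := smul_right_injective (EuclideanSpace ℝ (Fin 3)) (two_ne_zero (α := ℝ))
    rw [show (2 * (inner ℝ (f z) (g z) : ℝ)) • f z = (2:ℝ) • ((inner ℝ (f z) (g z) : ℝ) • f z) by
      rw [smul_smul]] at h3
    exact this h3
  have hsq : ∀ z, ((inner ℝ (f z) (g z) : ℝ))^2 = 1 := by
    intro z
    have := hg z
    rw [key z, norm_smul, hf z, mul_one, Real.norm_eq_abs] at this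
    nlinarith [this, sq_abs (inner ℝ (f z) (g z) : ℝ)]
  intro x y
  obtain ⟨R, hR, hRf⟩ := exists_rot (hf x) (hf y)
  have h2 := (hC x y R 1 hR SO3_one).mp (by rw [hRf, act_one])
  rw [key x, key y, act_smul, hRf, act_one] at h2
  have hfy0 : f y ≠ 0 := by
    intro h0; have := hf y; rw [h0] at this; simp at this
  have hcc : (inner ℝ (f x) (g x) : ℝ) = (inner ℝ (f y) (g y) : ℝ) := by
    by_contra hne
    exact hne (smul_left_injective ℝ hfy0 h2)
  rw [key x, key y, real_inner_smul_left, real_inner_smul_right, hcc, ← mul_assoc,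
    ← sq, hsq y, one_mul]
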